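/- Every 1-Segal simplicial set is 2-Segal: if X• is a simplicial set such that all Segal maps X_n → X_1 ×_{X_0} ⋯ ×_{X_0} X_1 are bijections, then for every n ≥ 3 and every 0 ≤ i < j ≤ n the map X_n → X_{{i,...,j}} ×_{X_{{i,j}}} X_{{0,...,i,j,...,n}} induced by the inclusions {i,...,j} ↪ [n] and {0,...,i,j,...,n} ↪ [n] is a bijection. -/

import Mathlib

open CategoryTheory Simplicial SimplexCategory Opposite

namespace RelSegal

/-- The morphism `[m] ⟶ [n]` in the simplex category determined by a monotone `ℕ`-valued map. -/
def natHom (m n : ℕ) (f : ℕ → ℕ) (hf : Monotone f) (h : f m ≤ n) :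
    (⦋m⦌ : SimplexCategory) ⟶ ⦋n⦌ :=
  SimplexCategory.mkHom
    { toFun := fun k => ⟨f k.1, by have := hf (Nat.lt_succ_iff.mp k.2); omega⟩
      monotone' := fun a b hab => by
        simp only [Fin.mk_le_mk]; exact hf hab }

/-- Restriction of simplices along a morphism of the simplex category. -/
def rmap (X : SSet) {m n : ℕ} (φ : (⦋m⦌ : SimplexCategory) ⟶ ⦋n⦌) :
    X.obj (op ⦋n⦌) → X.obj (op ⦋m⦌) := X.map φ.op

/-- The inclusion of the vertex `i` of `[n]`. -/
def vert (n i : ℕ) (h : i ≤ n) : (⦋0⦌ : SimplexCategory) ⟶ ⦋n⦌ :=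
  natHom 0 n (fun _ => i) monotone_const h

/-- The inclusion of the edge `{i,j}` of `[n]`. -/
def edge (n i j : ℕ) (hij : i ≤ j) (hj : j ≤ n) : (⦋1⦌ : SimplexCategory) ⟶ ⦋n⦌ :=
  natHom 1 n (fun k => i + k * (j - i))
    (fun a b hab => by
      have := Nat.mul_le_mul_right (j - i) hab
      show i + a * (j - i) ≤ i + b * (j - i); omega)
    (by show i + 1 * (j - i) ≤ n; omega)

/-- The inclusion of the interval `{i, i+1, …, j}` of `[n]`. -/
def interval (n i j : ℕ) (hij : i ≤ j) (hj : j ≤ n) : (⦋j - i⦌ : SimplexCategory) ⟶ ⦋n⦌ :=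
  natHom (j - i) n (fun k => i + k) (fun a b hab => by show i + a ≤ i + b; omega)
    (by show i + (j - i) ≤ n; omega)

/-- A commutative square of sets which is a pullback: the canonical map into the fibre
product is a bijection. -/
def IsSetPullback {A B C D : Type*} (p : A → B) (q : A → C) (g : B → D) (h : C → D) : Prop :=
  (∀ a, g (p a) = h (q a)) ∧ ∀ b c, g b = h c → ∃! a, p a = b ∧ q a = c

/-- A simplicial set is `1`-Segal if for every `n ≥ 2` the Segal map
`X_n → X_1 ×_{X_0} ⋯ ×_{X_0} X_1` is a bijection (injectivity together with
surjectivity onto the compatible families). -/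
def Is1Segal (X : SSet) : Prop :=
  ∀ n, 2 ≤ n →
    (∀ x y : X.obj (op ⦋n⦌),
      (∀ i (hi : i + 1 ≤ n),
        rmap X (edge n i (i + 1) (by omega) hi) x = rmap X (edge n i (i + 1) (by omega) hi) y) →
      x = y) ∧
    (∀ f : ∀ i, i + 1 ≤ n → X.obj (op ⦋1⦌),
      (∀ i (h1 : i + 1 ≤ n) (h2 : (i + 1) + 1 ≤ n),
        rmap X (vert 1 1 le_rfl) (f i h1) = rmap X (vert 1 0 (by omega)) (f (i + 1) h2)) →
      ∃ x : X.obj (op ⦋n⦌), ∀ i (hi : i + 1 ≤ n),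
        rmap X (edge n i (i + 1) (by omega) hi) x = f i hi)

/-- The inclusion of the subset `{0, …, i, j, …, n}` of `[n]`. -/
def outer (n i j : ℕ) (hij : i < j) (hj : j ≤ n) :
    (⦋n - j + i + 1⦌ : SimplexCategory) ⟶ ⦋n⦌ :=
  natHom (n - j + i + 1) n (fun k => if k ≤ i then k else k + (j - i - 1))
    (fun a b hab => by dsimp only; split_ifs <;> omega)
    (by (try dsimp only); split_ifs <;> omega)

/-- A simplicial set is `2`-Segal if for every `n ≥ 3` and `0 ≤ i < j ≤ n` the map
`X_n → X_{{i,…,j}} ×_{X_{{i,j}}} X_{{0,…,i,j,…,n}}` is a bijection. -/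
def Is2Segal (X : SSet) : Prop :=
  ∀ n i j (_ : 3 ≤ n) (hij : i < j) (hj : j ≤ n),
    IsSetPullback
      (rmap X (interval n i j hij.le hj))
      (rmap X (outer n i j hij hj))
      (rmap X (edge (j - i) 0 (j - i) (Nat.zero_le _) le_rfl))
      (rmap X (edge (n - j + i + 1) i (i + 1) (by omega) (by omega)))


lemma hom_ext {m n : ℕ} (f g : (⦋m⦌ : SimplexCategory) ⟶ ⦋n⦌)
    (h : ∀ k : Fin (m+1), (f.toOrderHom k : ℕ) = (g.toOrderHom k : ℕ)) : f = g := by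
  apply SimplexCategory.Hom.ext
  apply OrderHom.ext
  funext k
  exact Fin.ext (h k)

lemma rmap_rmap (X : SSet) {a b c : ℕ} (φ : (⦋a⦌ : SimplexCategory) ⟶ ⦋b⦌)
    (ψ : (⦋b⦌ : SimplexCategory) ⟶ ⦋c⦌) (x : X.obj (op ⦋c⦌)) :
    rmap X φ (rmap X ψ x) = rmap X (φ ≫ ψ) x := by
  simp only [rmap, op_comp, FunctorToTypes.map_comp_apply]

lemma rmap_id (X : SSet) {p : ℕ} (x : X.obj (op ⦋p⦌)) :
    rmap X (𝟙 (⦋p⦌ : SimplexCategory)) x = x := by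
  simp only [rmap, op_id, FunctorToTypes.map_id_apply]

lemma edge_eq {n i j i' j' : ℕ} (hi : i = i') (hj : j = j') (h1 : i ≤ j) (h2 : j ≤ n)
    (h1' : i' ≤ j') (h2' : j' ≤ n) : edge n i j h1 h2 = edge n i' j' h1' h2' := by
  subst hi; subst hj; rfl

lemma vert_eq {n i i' : ℕ} (hi : i = i') (h : i ≤ n) (h' : i' ≤ n) :
    vert n i h = vert n i' h' := by subst hi; rfl

lemma edge_one (h1 : (0:ℕ) ≤ 0 + 1) (h2 : 0 + 1 ≤ 1) :
    edge 1 0 (0+1) h1 h2 = 𝟙 (⦋1⦌ : SimplexCategory) := by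
  apply hom_ext; intro t
  fin_cases t <;> rfl

lemma L1 (n i j : ℕ) (hij : i < j) (hj : j ≤ n) (e1 e2) :
    edge (j-i) 0 (j-i) e1 e2 ≫ interval n i j hij.le hj = edge n i j hij.le hj := by
  apply hom_ext; intro t
  fin_cases t <;>
    (simp [edge, interval, natHom, SimplexCategory.mkHom, SimplexCategory.Hom.comp,
      SimplexCategory.Hom.toOrderHom_mk, OrderHom.comp, OrderHom.coe_mk, DFunLike.coe]) <;> omega

lemma L2 (n i j : ℕ) (hij : i < j) (hj : j ≤ n) (e1 e2) :
    edge (n-j+i+1) i (i+1) e1 e2 ≫ outer n i j hij hj = edge n i j hij.le hj := by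
  apply hom_ext; intro t
  fin_cases t <;>
    (simp [edge, outer, natHom, SimplexCategory.mkHom, SimplexCategory.Hom.comp,
      SimplexCategory.Hom.toOrderHom_mk, OrderHom.comp, OrderHom.coe_mk, DFunLike.coe]) <;>
    (try split_ifs) <;> omega

lemma L3 (n i j k : ℕ) (hij : i < j) (hj : j ≤ n) (hk : k + 1 ≤ i) (e1 e2) :
    edge (n-j+i+1) k (k+1) e1 e2 ≫ outer n i j hij hj
      = edge n k (k+1) (by omega) (by omega) := by
  apply hom_ext; intro t
  fin_cases t <;>
    (simp [edge, outer, natHom, SimplexCategory.mkHom, SimplexCategory.Hom.comp,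
      SimplexCategory.Hom.toOrderHom_mk, OrderHom.comp, OrderHom.coe_mk, DFunLike.coe]) <;>
    (try split_ifs) <;> omega

lemma L4 (n i j k : ℕ) (hij : i < j) (hj : j ≤ n) (hk : i < k) (hk2 : k + 1 ≤ n-j+i+1)
    (e1 e2) :
    edge (n-j+i+1) k (k+1) e1 e2 ≫ outer n i j hij hj
      = edge n (k+j-i-1) (k+j-i) (by omega) (by omega) := by
  apply hom_ext; intro t
  fin_cases t <;>
    (simp [edge, outer, natHom, SimplexCategory.mkHom, SimplexCategory.Hom.comp,
      SimplexCategory.Hom.toOrderHom_mk, OrderHom.comp, OrderHom.coe_mk, DFunLike.coe]) <;>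
    (try split_ifs) <;> omega

lemma L5 (n i j k : ℕ) (hij : i < j) (hj : j ≤ n) (hk : k + 1 ≤ j - i) (e1 e2) :
    edge (j-i) k (k+1) e1 e2 ≫ interval n i j hij.le hj
      = edge n (i+k) (i+k+1) (by omega) (by omega) := by
  apply hom_ext; intro t
  fin_cases t <;>
    (simp [edge, interval, natHom, SimplexCategory.mkHom, SimplexCategory.Hom.comp,
      SimplexCategory.Hom.toOrderHom_mk, OrderHom.comp, OrderHom.coe_mk, DFunLike.coe]) <;> omega

lemma V0 (n i j : ℕ) (h1 : i ≤ j) (h2 : j ≤ n) (h0 : (0:ℕ) ≤ 1) :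
    vert 1 0 h0 ≫ edge n i j h1 h2 = vert n i (h1.trans h2) := by
  apply hom_ext; intro t
  fin_cases t <;>
    (simp [edge, vert, natHom, SimplexCategory.mkHom, SimplexCategory.Hom.comp,
      SimplexCategory.Hom.toOrderHom_mk, OrderHom.comp, OrderHom.coe_mk, DFunLike.coe]) <;> omega

lemma V1 (n i j : ℕ) (h1 : i ≤ j) (h2 : j ≤ n) (h0 : (1:ℕ) ≤ 1) :
    vert 1 1 h0 ≫ edge n i j h1 h2 = vert n j h2 := by
  apply hom_ext; intro t
  fin_cases t <;>
    (simp [edge, vert, natHom, SimplexCategory.mkHom, SimplexCategory.Hom.comp,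
      SimplexCategory.Hom.toOrderHom_mk, OrderHom.comp, OrderHom.coe_mk, DFunLike.coe]) <;> omega

lemma inj1 (X : SSet) (hX : Is1Segal X) (p : ℕ) (hp : 1 ≤ p) (x y : X.obj (op ⦋p⦌))
    (h : ∀ k (hk : k + 1 ≤ p),
      rmap X (edge p k (k+1) (by omega) hk) x = rmap X (edge p k (k+1) (by omega) hk) y) :
    x = y := by
  rcases Nat.lt_or_ge p 2 with hp2 | hp2
  · have hp1 : p = 1 := by omega
    subst hp1
    have := h 0 le_rfl
    rwa [edge_one, rmap_id, rmap_id] at this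
  · exact (hX p hp2).1 x y h

/-- The family of edges determined by `b` and `c`. -/
def fam (X : SSet) (n i j : ℕ) (hij : i < j) (hj : j ≤ n)
    (b : X.obj (op ⦋j-i⦌)) (c : X.obj (op ⦋n-j+i+1⦌)) (k : ℕ) (hk : k + 1 ≤ n) :
    X.obj (op ⦋1⦌) :=
  if h : k < i then rmap X (edge (n-j+i+1) k (k+1) (by omega) (by omega)) c
  else if h2 : k < j then rmap X (edge (j-i) (k-i) (k-i+1) (by omega) (by omega)) b
  else rmap X (edge (n-j+i+1) (k-j+i+1) (k-j+i+2) (by omega) (by omega)) c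

lemma fam_lt (X : SSet) (n i j : ℕ) (hij : i < j) (hj : j ≤ n)
    (b : X.obj (op ⦋j-i⦌)) (c : X.obj (op ⦋n-j+i+1⦌)) (k : ℕ) (hk : k + 1 ≤ n)
    (h : k < i) :
    fam X n i j hij hj b c k hk
      = rmap X (edge (n-j+i+1) k (k+1) (by omega) (by omega)) c := by
  rw [fam, dif_pos h]

lemma fam_mid (X : SSet) (n i j : ℕ) (hij : i < j) (hj : j ≤ n)
    (b : X.obj (op ⦋j-i⦌)) (c : X.obj (op ⦋n-j+i+1⦌)) (k : ℕ) (hk : k + 1 ≤ n)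
    (h : ¬ k < i) (h2 : k < j) :
    fam X n i j hij hj b c k hk
      = rmap X (edge (j-i) (k-i) (k-i+1) (by omega) (by omega)) b := by
  rw [fam, dif_neg h, dif_pos h2]

lemma fam_ge (X : SSet) (n i j : ℕ) (hij : i < j) (hj : j ≤ n)
    (b : X.obj (op ⦋j-i⦌)) (c : X.obj (op ⦋n-j+i+1⦌)) (k : ℕ) (hk : k + 1 ≤ n)
    (h : ¬ k < i) (h2 : ¬ k < j) :
    fam X n i j hij hj b c k hk
      = rmap X (edge (n-j+i+1) (k-j+i+1) (k-j+i+2) (by omega) (by omega)) c := by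
  rw [fam, dif_neg h, dif_neg h2]


lemma rmapL1 (X : SSet) (n i j : ℕ) (hij : i < j) (hj : j ≤ n) (e1 e2) (x : X.obj (op ⦋n⦌)) :
    rmap X (edge (j-i) 0 (j-i) e1 e2) (rmap X (interval n i j hij.le hj) x)
      = rmap X (edge n i j hij.le hj) x := by rw [rmap_rmap, L1 n i j hij hj]

lemma rmapL2 (X : SSet) (n i j : ℕ) (hij : i < j) (hj : j ≤ n) (e1 e2) (x : X.obj (op ⦋n⦌)) :
    rmap X (edge (n-j+i+1) i (i+1) e1 e2) (rmap X (outer n i j hij hj) x)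
      = rmap X (edge n i j hij.le hj) x := by rw [rmap_rmap, L2 n i j hij hj]

lemma rmapL3 (X : SSet) (n i j k : ℕ) (hij : i < j) (hj : j ≤ n) (hk : k + 1 ≤ i) (e1 e2)
    (x : X.obj (op ⦋n⦌)) :
    rmap X (edge (n-j+i+1) k (k+1) e1 e2) (rmap X (outer n i j hij hj) x)
      = rmap X (edge n k (k+1) (by omega) (by omega)) x := by
  rw [rmap_rmap, L3 n i j k hij hj hk]

lemma L4' (n i j k : ℕ) (hij : i < j) (hj : j ≤ n) (hk : i < k) (hk2 : k + 1 ≤ n-j+i+1)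
    (e1 e2) :
    edge (n-j+i+1) k (k+1) e1 e2 ≫ outer n i j hij hj
      = edge n (k+j-i-1) (k+j-i-1+1) (by omega) (by omega) := by
  apply hom_ext; intro t
  fin_cases t <;>
    (simp [edge, outer, natHom, SimplexCategory.mkHom, SimplexCategory.Hom.comp,
      SimplexCategory.Hom.toOrderHom_mk, OrderHom.comp, OrderHom.coe_mk, DFunLike.coe]) <;>
    (try split_ifs) <;> omega

lemma rmapL4 (X : SSet) (n i j k : ℕ) (hij : i < j) (hj : j ≤ n) (hk : i < k)
    (hk2 : k + 1 ≤ n-j+i+1) (e1 e2) (x : X.obj (op ⦋n⦌)) :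
    rmap X (edge (n-j+i+1) k (k+1) e1 e2) (rmap X (outer n i j hij hj) x)
      = rmap X (edge n (k+j-i-1) (k+j-i-1+1) (by omega) (by omega)) x := by
  rw [rmap_rmap, L4' n i j k hij hj hk hk2]

lemma rmapL5 (X : SSet) (n i j k : ℕ) (hij : i < j) (hj : j ≤ n) (hk : k + 1 ≤ j - i) (e1 e2)
    (x : X.obj (op ⦋n⦌)) :
    rmap X (edge (j-i) k (k+1) e1 e2) (rmap X (interval n i j hij.le hj) x)
      = rmap X (edge n (i+k) (i+k+1) (by omega) (by omega)) x := by
  rw [rmap_rmap, L5 n i j k hij hj hk]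

lemma rmapV0 (X : SSet) (n i j : ℕ) (h1 : i ≤ j) (h2 : j ≤ n) (h0 : (0:ℕ) ≤ 1) (v : ℕ)
    (hv : v = i) (hvn : v ≤ n) (x : X.obj (op ⦋n⦌)) :
    rmap X (vert 1 0 h0) (rmap X (edge n i j h1 h2) x) = rmap X (vert n v hvn) x := by
  subst hv; rw [rmap_rmap, V0]

lemma rmapV1 (X : SSet) (n i j : ℕ) (h1 : i ≤ j) (h2 : j ≤ n) (h0 : (1:ℕ) ≤ 1) (v : ℕ)
    (hv : v = j) (hvn : v ≤ n) (x : X.obj (op ⦋n⦌)) :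
    rmap X (vert 1 1 h0) (rmap X (edge n i j h1 h2) x) = rmap X (vert n v hvn) x := by
  subst hv; rw [rmap_rmap, V1]

lemma fam_compat (X : SSet) (n i j : ℕ) (hij : i < j) (hj : j ≤ n)
    (b : X.obj (op ⦋j-i⦌)) (c : X.obj (op ⦋n-j+i+1⦌))
    (hbc : rmap X (edge (j-i) 0 (j-i) (Nat.zero_le _) le_rfl) b
         = rmap X (edge (n-j+i+1) i (i+1) (by omega) (by omega)) c)
    (k : ℕ) (h1 : k+1 ≤ n) (h2 : (k+1)+1 ≤ n) :
    rmap X (vert 1 1 le_rfl) (fam X n i j hij hj b c k h1)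
      = rmap X (vert 1 0 (by omega)) (fam X n i j hij hj b c (k+1) h2) := by
  have h0 : rmap X (vert (j-i) 0 (by omega)) b = rmap X (vert (n-j+i+1) i (by omega)) c := by
    have h' := congrArg (rmap X (vert 1 0 (by omega : (0:ℕ) ≤ 1))) hbc
    rwa [rmapV0 X (j-i) 0 (j-i) (by omega) le_rfl (by omega) 0 rfl (by omega),
         rmapV0 X (n-j+i+1) i (i+1) (by omega) (by omega) (by omega) i rfl (by omega)] at h'
  have h1' : rmap X (vert (j-i) (j-i) le_rfl) b
      = rmap X (vert (n-j+i+1) (i+1) (by omega)) c := by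
    have h' := congrArg (rmap X (vert 1 1 le_rfl)) hbc
    rwa [rmapV1 X (j-i) 0 (j-i) (by omega) le_rfl le_rfl (j-i) rfl le_rfl,
         rmapV1 X (n-j+i+1) i (i+1) (by omega) (by omega) le_rfl (i+1) rfl (by omega)] at h'
  rcases Nat.lt_or_ge (k+1) i with hki | hki
  · rw [fam_lt X n i j hij hj b c k h1 (by omega), fam_lt X n i j hij hj b c (k+1) h2 (by omega),
        rmapV1 X (n-j+i+1) k (k+1) (by omega) (by omega) le_rfl (k+1) rfl (by omega),
        rmapV0 X (n-j+i+1) (k+1) (k+1+1) (by omega) (by omega) (by omega) (k+1) rfl (by omega)]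
  · rcases Nat.lt_or_ge k i with hki2 | hki2
    · rw [fam_lt X n i j hij hj b c k h1 hki2,
          fam_mid X n i j hij hj b c (k+1) h2 (by omega) (by omega),
          rmapV1 X (n-j+i+1) k (k+1) (by omega) (by omega) le_rfl i (by omega) (by omega),
          rmapV0 X (j-i) (k+1-i) (k+1-i+1) (by omega) (by omega) (by omega) 0 (by omega)
            (by omega)]
      exact h0.symm
    · rcases Nat.lt_or_ge (k+1) j with hkj | hkj
      · rw [fam_mid X n i j hij hj b c k h1 (by omega) (by omega),
            fam_mid X n i j hij hj b c (k+1) h2 (by omega) (by omega),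
            rmapV1 X (j-i) (k-i) (k-i+1) (by omega) (by omega) le_rfl (k-i+1) rfl (by omega),
            rmapV0 X (j-i) (k+1-i) (k+1-i+1) (by omega) (by omega) (by omega) (k-i+1)
              (by omega) (by omega)]
      · rcases Nat.lt_or_ge k j with hkj2 | hkj2
        · rw [fam_mid X n i j hij hj b c k h1 (by omega) hkj2,
              fam_ge X n i j hij hj b c (k+1) h2 (by omega) (by omega),
              rmapV1 X (j-i) (k-i) (k-i+1) (by omega) (by omega) le_rfl (j-i) (by omega) le_rfl,
              rmapV0 X (n-j+i+1) (k+1-j+i+1) (k+1-j+i+2) (by omega) (by omega) (by omega)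
                (i+1) (by omega) (by omega)]
          exact h1'
        · rw [fam_ge X n i j hij hj b c k h1 (by omega) (by omega),
              fam_ge X n i j hij hj b c (k+1) h2 (by omega) (by omega),
              rmapV1 X (n-j+i+1) (k-j+i+1) (k-j+i+2) (by omega) (by omega) le_rfl (k-j+i+2)
                rfl (by omega),
              rmapV0 X (n-j+i+1) (k+1-j+i+1) (k+1-j+i+2) (by omega) (by omega) (by omega)
                (k-j+i+2) (by omega) (by omega)]

/-- every 1-Segal simplicial set is 2-Segal. -/
theorem statement3 (X : SSet) (hX : Is1Segal X) : Is2Segal X := by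
  intro n i j hn hij hj
  constructor
  · intro a
    rw [rmapL1 X n i j hij hj, ← rmapL2 X n i j hij hj]
  · intro b c hbc
    obtain ⟨a, ha⟩ := (hX n (by omega)).2 (fam X n i j hij hj b c)
      (fun k h1 h2 => fam_compat X n i j hij hj b c hbc k h1 h2)
    have hb' : rmap X (interval n i j hij.le hj) a = b := by
      apply inj1 X hX (j-i) (by omega)
      intro k hk
      rw [rmapL5 X n i j k hij hj hk, ha (i+k) (by omega),
          fam_mid X n i j hij hj b c (i+k) (by omega) (by omega) (by omega),
          edge_eq (show i+k-i = k by omega) (show i+k-i+1 = k+1 by omega)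
            (by omega) (by omega) (by omega) hk]
    have hc' : rmap X (outer n i j hij hj) a = c := by
      apply inj1 X hX (n-j+i+1) (by omega)
      intro k hk
      rcases lt_trichotomy k i with h | h | h
      · rw [rmapL3 X n i j k hij hj (by omega), ha k (by omega),
            fam_lt X n i j hij hj b c k (by omega) h]
      · subst h
        calc rmap X (edge (n-j+k+1) k (k+1) (by omega) hk) (rmap X (outer n k j hij hj) a)
            = rmap X (edge n k j hij.le hj) a := rmapL2 X n k j hij hj _ _ a
          _ = rmap X (edge (j-k) 0 (j-k) (by omega) le_rfl)
                (rmap X (interval n k j hij.le hj) a) := (rmapL1 X n k j hij hj _ _ a).symm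
          _ = rmap X (edge (j-k) 0 (j-k) (by omega) le_rfl) b := by rw [hb']
          _ = rmap X (edge (n-j+k+1) k (k+1) (by omega) (by omega)) c := hbc
      · rw [rmapL4 X n i j k hij hj h hk, ha (k+j-i-1) (by omega),
            fam_ge X n i j hij hj b c (k+j-i-1) (by omega) (by omega) (by omega),
            edge_eq (show k+j-i-1-j+i+1 = k by omega) (show k+j-i-1-j+i+2 = k+1 by omega)
              (by omega) (by omega) (by omega) hk]
    refine ⟨a, ⟨hb', hc'⟩, ?_⟩
    rintro a' ⟨hb2, hc2⟩
    apply inj1 X hX n (by omega)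
    intro k hk
    rcases Nat.lt_or_ge k i with h | h
    · rw [← rmapL3 X n i j k hij hj (by omega) (by omega) (by omega) a',
          ← rmapL3 X n i j k hij hj (by omega) (by omega) (by omega) a, hc2, hc']
    · rcases Nat.lt_or_ge k j with h2 | h2
      · rw [edge_eq (n := n) (show k = i+(k-i) by omega) (show k+1 = i+(k-i)+1 by omega)
              (by omega) hk (by omega) (by omega),
            ← rmapL5 X n i j (k-i) hij hj (by omega) (by omega) (by omega) a',
            ← rmapL5 X n i j (k-i) hij hj (by omega) (by omega) (by omega) a, hb2, hb']
      · rw [edge_eq (n := n) (show k = (k-j+i+1)+j-i-1 by omega)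
              (show k+1 = (k-j+i+1)+j-i-1+1 by omega) (by omega) hk (by omega) (by omega),
            ← rmapL4 X n i j (k-j+i+1) hij hj (by omega) (by omega) (by omega) (by omega) a',
            ← rmapL4 X n i j (k-j+i+1) hij hj (by omega) (by omega) (by omega) (by omega) a,
            hc2, hc']


end RelSegal
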